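/- The improper integral ∫₀^∞ (1 − exp(−ψ(ζ))) dζ converges and equals 2√2·B/(√(8 + B²) + 2√2 + B). -/

import Mathlib

open Real Set Filter MeasureTheory

/-- The paper's explicit Debye-layer solution for positive scaled wall charge
`B > 0`: `ψ(ζ) = 2 log(coth((ζ + c)/√2))` with
`c = (1/√2)·arsinh(2√2/B)`, written with `coth = cosh/sinh`. -/
noncomputable def psiDpos (B ζ : ℝ) : ℝ :=
  2 * Real.log
    (Real.cosh ((ζ + (1 / Real.sqrt 2) * Real.arsinh (2 * Real.sqrt 2 / B)) / Real.sqrt 2) /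
     Real.sinh ((ζ + (1 / Real.sqrt 2) * Real.arsinh (2 * Real.sqrt 2 / B)) / Real.sqrt 2))

/-- The Debye-layer correction integral for `G₁`:
`∫₀^∞ (1 - e^{-ψ(ζ)}) dζ = 2√2·B/(√(8+B²) + 2√2 + B)`. -/
theorem stmt_8 (B : ℝ) (hB : 0 < B) :
    IntegrableOn (fun ζ => 1 - Real.exp (-psiDpos B ζ)) (Set.Ioi 0) ∧
    (∫ ζ in Set.Ioi (0:ℝ), (1 - Real.exp (-psiDpos B ζ))) =
      2 * Real.sqrt 2 * B / (Real.sqrt (8 + B ^ 2) + 2 * Real.sqrt 2 + B) := by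
  have h2 : (0:ℝ) < Real.sqrt 2 := Real.sqrt_pos.2 (by norm_num)
  set c : ℝ := (1 / Real.sqrt 2) * Real.arsinh (2 * Real.sqrt 2 / B) with hc_def
  have hx : 0 < 2 * Real.sqrt 2 / B := by positivity
  have hc : 0 < c := by
    apply mul_pos (by positivity)
    rw [Real.arsinh_pos_iff]; exact hx
  set u : ℝ → ℝ := fun ζ => (ζ + c) / Real.sqrt 2 with hu_def
  set F : ℝ → ℝ := fun ζ => Real.sqrt 2 * (Real.sinh (u ζ) / Real.cosh (u ζ)) with hF_def
  have hsinh_pos : ∀ ζ ∈ Ici (0:ℝ), 0 < Real.sinh (u ζ) := by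
    intro ζ hζ
    have h0 : 0 < u ζ := by
      have : 0 < ζ + c := by linarith [hζ.out]
      positivity
    exact Real.sinh_pos_iff.2 h0
  have hcosh_pos : ∀ ζ : ℝ, 0 < Real.cosh (u ζ) := fun ζ => Real.cosh_pos _
  have hkey : ∀ ζ ∈ Ici (0:ℝ),
      1 - Real.exp (-psiDpos B ζ) = 1 / Real.cosh (u ζ) ^ 2 := by
    intro ζ hζ
    have hs := hsinh_pos ζ hζ
    have hcp := hcosh_pos ζ
    have he : Real.exp (-psiDpos B ζ) = Real.sinh (u ζ) ^ 2 / Real.cosh (u ζ) ^ 2 := by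
      rw [psiDpos]
      rw [show -(2 * Real.log (Real.cosh ((ζ + c)/Real.sqrt 2) / Real.sinh ((ζ + c)/Real.sqrt 2)))
          = (2:ℕ) * Real.log (Real.sinh (u ζ) / Real.cosh (u ζ)) by
        rw [Real.log_div (ne_of_gt hcp) (ne_of_gt hs),
            Real.log_div (ne_of_gt hs) (ne_of_gt hcp)]
        push_cast; ring]
      rw [Real.exp_nat_mul, Real.exp_log (by positivity), div_pow]
    rw [he]
    have hident := Real.cosh_sq_sub_sinh_sq (u ζ)
    have hc2 : Real.cosh (u ζ) ^ 2 ≠ 0 := by positivity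
    field_simp
    linarith [hident]
  have hderiv : ∀ ζ ∈ Ici (0:ℝ),
      HasDerivAt F (1 - Real.exp (-psiDpos B ζ)) ζ := by
    intro ζ hζ
    rw [hkey ζ hζ]
    have hu' : HasDerivAt u (1 / Real.sqrt 2) ζ := by
      simpa using ((hasDerivAt_id ζ).add_const c).div_const (Real.sqrt 2)
    have hs : HasDerivAt (fun ζ => Real.sinh (u ζ)) (Real.cosh (u ζ) * (1 / Real.sqrt 2)) ζ :=
      (Real.hasDerivAt_sinh (u ζ)).comp ζ hu'
    have hcsh : HasDerivAt (fun ζ => Real.cosh (u ζ)) (Real.sinh (u ζ) * (1 / Real.sqrt 2)) ζ :=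
      (Real.hasDerivAt_cosh (u ζ)).comp ζ hu'
    have hcp := hcosh_pos ζ
    have hd := (hs.div hcsh (ne_of_gt hcp)).const_mul (Real.sqrt 2)
    refine hd.congr_deriv ?_
    have h1 := Real.cosh_sq_sub_sinh_sq (u ζ)
    have hsq : Real.sqrt 2 ^ 2 = 2 := Real.sq_sqrt (by norm_num)
    field_simp
    nlinarith [hcp]
  have hnonneg : ∀ ζ ∈ Ioi (0:ℝ), 0 ≤ 1 - Real.exp (-psiDpos B ζ) := by
    intro ζ hζ
    rw [hkey ζ (Set.mem_Ici.2 (le_of_lt (Set.mem_Ioi.1 hζ)))]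
    positivity
  have hlim : Tendsto F atTop (nhds (Real.sqrt 2)) := by
    have h1 : ∀ ζ : ℝ, Real.sinh (u ζ) / Real.cosh (u ζ)
        = (1 - Real.exp (-2 * u ζ)) / (1 + Real.exp (-2 * u ζ)) := by
      intro ζ
      rw [Real.sinh_eq, Real.cosh_eq]
      have he : (0:ℝ) < Real.exp (u ζ) := Real.exp_pos _
      have he2 : (0:ℝ) < Real.exp (-u ζ) := Real.exp_pos _
      rw [show Real.exp (-2 * u ζ) = Real.exp (-u ζ) / Real.exp (u ζ) by
        rw [← Real.exp_sub]; ring_nf]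
      have hden : 0 < 1 + Real.exp (-u ζ) / Real.exp (u ζ) := by positivity
      field_simp
    have hut : Tendsto u atTop atTop := by
      apply Tendsto.atTop_div_const h2
      exact tendsto_atTop_add_const_right _ c tendsto_id
    have hexp : Tendsto (fun ζ => Real.exp (-2 * u ζ)) atTop (nhds 0) :=
      Real.tendsto_exp_atBot.comp (hut.const_mul_atTop_of_neg (by norm_num))
    have hnum : Tendsto (fun ζ => 1 - Real.exp (-2 * u ζ)) atTop (nhds (1 - 0)) :=
      tendsto_const_nhds.sub hexp
    have hden2 : Tendsto (fun ζ => 1 + Real.exp (-2 * u ζ)) atTop (nhds (1 + 0)) :=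
      tendsto_const_nhds.add hexp
    have hratio : Tendsto (fun ζ => (1 - Real.exp (-2 * u ζ)) / (1 + Real.exp (-2 * u ζ)))
        atTop (nhds 1) := by
      have := hnum.div hden2 (by norm_num)
      simp only [sub_zero, add_zero, div_one] at this
      exact this
    have : Tendsto F atTop (nhds (Real.sqrt 2 * 1)) := by
      simp only [hF_def, h1]
      exact hratio.const_mul _
    simpa using this
  have hInt : IntegrableOn (fun ζ => 1 - Real.exp (-psiDpos B ζ)) (Set.Ioi 0) :=
    integrableOn_Ioi_deriv_of_nonneg' hderiv hnonneg hlim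
  refine ⟨hInt, ?_⟩
  rw [integral_Ioi_of_hasDerivAt_of_nonneg' hderiv hnonneg hlim]
  -- compute F 0
  have hsq : Real.sqrt 2 ^ 2 = 2 := Real.sq_sqrt (by norm_num)
  set x : ℝ := 2 * Real.sqrt 2 / B with hx_def
  have hu0 : u 0 = Real.arsinh x / 2 := by
    simp only [hu_def, hc_def, zero_add]
    rw [div_eq_div_iff (ne_of_gt h2) (by norm_num)]
    have hm : Real.sqrt 2 * Real.sqrt 2 = 2 := Real.mul_self_sqrt (by norm_num)
    field_simp
    linear_combination (-(Real.arsinh x)) * hsq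
  set t : ℝ := Real.arsinh x / 2 with ht_def
  have h2t : 2 * t = Real.arsinh x := by rw [ht_def]; ring
  have htanh : Real.sinh t / Real.cosh t = x / (Real.sqrt (1 + x ^ 2) + 1) := by
    have hs2 : Real.sinh (2 * t) = 2 * Real.sinh t * Real.cosh t := Real.sinh_two_mul t
    have hc2 : Real.cosh (2 * t) = Real.cosh t ^ 2 + Real.sinh t ^ 2 := Real.cosh_two_mul t
    rw [h2t, Real.sinh_arsinh] at hs2
    rw [h2t, Real.cosh_arsinh] at hc2
    have hcp : (0:ℝ) < Real.cosh t := Real.cosh_pos t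
    have hden : 0 < Real.sqrt (1 + x ^ 2) + 1 := by positivity
    have hident := Real.cosh_sq_sub_sinh_sq t
    rw [div_eq_div_iff (ne_of_gt hcp) (ne_of_gt hden)]
    nlinarith [hident, hs2, hc2]
  have hF0 : F 0 = Real.sqrt 2 * (x / (Real.sqrt (1 + x ^ 2) + 1)) := by
    rw [hF_def]; simp only [hu0, ← ht_def, htanh]
  rw [hF0]
  -- final algebra
  set S : ℝ := Real.sqrt (8 + B ^ 2) with hS_def
  have hS2 : S ^ 2 = 8 + B ^ 2 := Real.sq_sqrt (by positivity)
  have hSpos : 0 < S := Real.sqrt_pos.2 (by positivity)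
  have hxx : Real.sqrt (1 + x ^ 2) = S / B := by
    rw [hx_def, hS_def]
    rw [show (1:ℝ) + (2 * Real.sqrt 2 / B) ^ 2 = (8 + B ^ 2) / B ^ 2 by
      field_simp; nlinarith [hsq]]
    rw [Real.sqrt_div (by positivity), Real.sqrt_sq hB.le]
  rw [hxx, hx_def]
  have hSB : 0 < S + B := by linarith
  have hden3 : 0 < S + 2 * Real.sqrt 2 + B := by positivity
  have hred : 2 * Real.sqrt 2 / B / (S / B + 1) = 2 * Real.sqrt 2 / (S + B) := by
    rw [div_eq_div_iff (by positivity) (ne_of_gt hSB)]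
    field_simp
  rw [hred]
  rw [eq_div_iff (ne_of_gt hden3)]
  field_simp
  linear_combination hS2 - 4 * hsq
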